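/- If ν_k → ν and μ_k → μ in distribution (weak convergence of probability measures on ℝⁿ), and for every k there exists an L-Lipschitz map T_k with (T_k)_# ν_k = μ_k, then there exists an L-Lipschitz map T with T_# ν = μ. -/

import Mathlib

open MeasureTheory Filter Metric BoundedContinuousFunction
open scoped ENNReal NNReal

private abbrev Euc (n : ℕ) := EuclideanSpace ℝ (Fin n)

private lemma tight_ball {n : ℕ} (ρ : ProbabilityMeasure (Euc n))
    {c : ℝ≥0∞} (hc : c < 1) :
    ∃ r : ℝ, 0 < r ∧ c < (ρ : Measure (Euc n)) (ball 0 r) := by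
  have hmono : Monotone (fun m : ℕ => ball (0 : Euc n) (m : ℝ)) := by
    intro a b hab
    exact ball_subset_ball (by exact_mod_cast hab)
  have hUniv : (⋃ m : ℕ, ball (0 : Euc n) (m : ℝ)) = Set.univ := by
    ext x
    simp only [Set.mem_iUnion, Set.mem_univ, iff_true, mem_ball, dist_zero_right]
    obtain ⟨m, hm⟩ := exists_nat_gt ‖x‖
    exact ⟨m, hm⟩
  have ht := tendsto_measure_iUnion_atTop (μ := (ρ : Measure (Euc n))) hmono
  rw [hUniv, measure_univ] at ht
  obtain ⟨m, hm⟩ := (ht.eventually_const_lt hc).exists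
  exact ⟨m + 1, by positivity,
    lt_of_lt_of_le hm (measure_mono (ball_subset_ball (by linarith)))⟩

private lemma ev_lt {n : ℕ} {νk : ℕ → ProbabilityMeasure (Euc n)}
    {ν : ProbabilityMeasure (Euc n)} (hν : Tendsto νk atTop (nhds ν))
    {G : Set (Euc n)} (hG : IsOpen G) {c : ℝ≥0∞}
    (hc : c < (ν : Measure (Euc n)) G) :
    ∀ᶠ k in atTop, c < (νk k : Measure (Euc n)) G := by
  have h := ProbabilityMeasure.le_liminf_measure_open_of_tendsto hν hG
  exact eventually_lt_of_lt_liminf (lt_of_lt_of_le hc h)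

/-- If ν_k → ν and μ_k → μ weakly (probability measures on ℝⁿ), and for
every k there is an L-Lipschitz map T_k pushing ν_k onto μ_k, then there is an
L-Lipschitz map T pushing ν onto μ. -/
theorem stmt_0 (n : ℕ) (L : NNReal)
    (ν μ : ProbabilityMeasure (EuclideanSpace ℝ (Fin n)))
    (νk μk : ℕ → ProbabilityMeasure (EuclideanSpace ℝ (Fin n)))
    (hν : Tendsto νk atTop (nhds ν)) (hμ : Tendsto μk atTop (nhds μ))
    (T : ℕ → EuclideanSpace ℝ (Fin n) → EuclideanSpace ℝ (Fin n))
    (hT : ∀ k, LipschitzWith L (T k))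
    (hpush : ∀ k, (νk k : Measure (EuclideanSpace ℝ (Fin n))).map (T k) = μk k) :
    ∃ S : EuclideanSpace ℝ (Fin n) → EuclideanSpace ℝ (Fin n),
      LipschitzWith L S ∧ (ν : Measure (EuclideanSpace ℝ (Fin n))).map S = μ := by
  classical
  obtain ⟨U, hUat⟩ := Filter.exists_ultrafilter_le (atTop : Filter ℕ)
  have hL0 : (0:ℝ) ≤ (L : ℝ) := L.coe_nonneg
  -- Step (a): an eventual growth bound for the maps T k.
  obtain ⟨r0, hr0pos, hr0⟩ := tight_ball ν (by norm_num : (1/2 : ℝ≥0∞) < 1)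
  obtain ⟨R0, hR0pos, hR0⟩ := tight_ball μ (by norm_num : (1/2 : ℝ≥0∞) < 1)
  have hν_ev := ev_lt hν isOpen_ball hr0
  have hμ_ev := ev_lt hμ isOpen_ball hR0
  set C : ℝ := R0 + L * r0 with hCdef
  have hgrow : ∀ᶠ k in atTop, ∀ x : Euc n, ‖T k x‖ ≤ C + L * ‖x‖ := by
    filter_upwards [hν_ev, hμ_ev] with k h1 h2
    have hmeas : Measurable (T k) := (hT k).continuous.measurable
    have hpre : (νk k : Measure (Euc n)) (T k ⁻¹' ball 0 R0)
        = (μk k : Measure (Euc n)) (ball 0 R0) := by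
      rw [← hpush k, Measure.map_apply hmeas measurableSet_ball]
    have hinter : (νk k : Measure (Euc n)) (ball 0 r0 ∩ T k ⁻¹' ball 0 R0) ≠ 0 := by
      intro h0
      have hmB : MeasurableSet (T k ⁻¹' ball (0 : Euc n) R0) := hmeas measurableSet_ball
      have hadd := measure_union_add_inter (μ := (νk k : Measure (Euc n))) (ball 0 r0) hmB
      rw [h0, add_zero] at hadd
      have hle : (νk k : Measure (Euc n)) (ball 0 r0 ∪ T k ⁻¹' ball 0 R0) ≤ 1 := prob_le_one
      have hgt : (1 : ℝ≥0∞) < (νk k : Measure (Euc n)) (ball 0 r0) +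
          (νk k : Measure (Euc n)) (T k ⁻¹' ball 0 R0) := by
        rw [hpre]
        calc (1 : ℝ≥0∞) = 1/2 + 1/2 := by rw [ENNReal.add_halves]
        _ < _ := ENNReal.add_lt_add h1 h2
      rw [← hadd] at hgt
      exact absurd hle (not_le.mpr hgt)
    obtain ⟨y, hy1, hy2⟩ := nonempty_of_measure_ne_zero hinter
    rw [Set.mem_preimage, mem_ball, dist_zero_right] at hy2
    rw [mem_ball, dist_zero_right] at hy1
    intro x
    have hlip : dist (T k x) (T k y) ≤ L * dist x y :=
      lipschitzWith_iff_dist_le_mul.mp (hT k) x y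
    have hds : dist x y ≤ ‖x‖ + ‖y‖ := by
      simpa [dist_eq_norm] using norm_sub_le x y
    calc ‖T k x‖ = dist (T k x) 0 := (dist_zero_right _).symm
    _ ≤ dist (T k x) (T k y) + dist (T k y) 0 := dist_triangle _ _ _
    _ ≤ (L : ℝ) * (‖x‖ + ‖y‖) + R0 := by
        refine add_le_add (hlip.trans ?_) ?_
        · exact mul_le_mul_of_nonneg_left hds hL0
        · rw [dist_zero_right]; exact hy2.le
    _ ≤ C + L * ‖x‖ := by
        rw [hCdef]
        nlinarith [hy1.le]
  -- Step (b): define S as the ultrafilter limit.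
  have hSx : ∀ x : Euc n, ∃ a : Euc n, Tendsto (fun k => T k x) (U : Filter ℕ) (nhds a) := by
    intro x
    have hev : ∀ᶠ k in (U : Filter ℕ), T k x ∈ closedBall (0 : Euc n) (C + L * ‖x‖) := by
      apply hUat
      filter_upwards [hgrow] with k hk
      simpa [mem_closedBall, dist_zero_right] using hk x
    have hcpt : IsCompact (closedBall (0 : Euc n) (C + L * ‖x‖)) := isCompact_closedBall _ _
    obtain ⟨a, -, ha⟩ := hcpt.ultrafilter_le_nhds (U.map (fun k => T k x))
      (by rw [Ultrafilter.coe_map, le_principal_iff, mem_map]; exact hev)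
    exact ⟨a, ha⟩
  choose S hS using hSx
  have hLip : LipschitzWith L S := by
    rw [lipschitzWith_iff_dist_le_mul]
    intro x y
    refine le_of_tendsto ((hS x).dist (hS y)) (Eventually.of_forall fun k => ?_)
    exact lipschitzWith_iff_dist_le_mul.mp (hT k) x y
  have hScont : Continuous S := hLip.continuous
  have hSnorm : ∀ x : Euc n, ‖S x‖ ≤ C + L * ‖x‖ := by
    intro x
    refine le_of_tendsto (hS x).norm ?_
    apply hUat
    filter_upwards [hgrow] with k hk using hk x
  -- Step (c): the key integral identity.
  have key : ∀ f : BoundedContinuousFunction (Euc n) ℝ,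
      ∫ x, f x ∂(μ : Measure (Euc n)) = ∫ x, f (S x) ∂(ν : Measure (Euc n)) := by
    intro f
    set g : BoundedContinuousFunction (Euc n) ℝ := f.compContinuous ⟨S, hScont⟩ with hgdef
    have hgx : ∀ x, g x = f (S x) := fun x => rfl
    have h1 : Tendsto (fun k => ∫ x, f x ∂(μk k : Measure (Euc n))) atTop
        (nhds (∫ x, f x ∂(μ : Measure (Euc n)))) :=
      ProbabilityMeasure.tendsto_iff_forall_integral_tendsto.mp hμ f
    have h3 : Tendsto (fun k => ∫ x, g x ∂(νk k : Measure (Euc n))) atTop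
        (nhds (∫ x, g x ∂(ν : Measure (Euc n)))) :=
      ProbabilityMeasure.tendsto_iff_forall_integral_tendsto.mp hν g
    have hrw : ∀ k, ∫ x, f x ∂(μk k : Measure (Euc n))
        = ∫ x, f (T k x) ∂(νk k : Measure (Euc n)) := by
      intro k
      rw [← hpush k, integral_map (hT k).continuous.measurable.aemeasurable
        f.continuous.measurable.aestronglyMeasurable]
    -- THE CORE: the distance between the two integrals tends to zero along U.
    have hdiff : Tendsto (fun k => dist (∫ x, f (T k x) ∂(νk k : Measure (Euc n)))
        (∫ x, g x ∂(νk k : Measure (Euc n)))) (U : Filter ℕ) (nhds 0) := by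
      rw [Metric.tendsto_nhds]
      intro ε hε
      set Cf : ℝ := ‖f‖ with hCfdef
      have hCf0 : 0 ≤ Cf := norm_nonneg f
      set η : ℝ := min (ε / (8 * (Cf + 1))) 1 with hηdef
      have hηpos : 0 < η := lt_min (by positivity) one_pos
      have hη1 : η ≤ 1 := min_le_right _ _
      have hηε : η ≤ ε / (8 * (Cf + 1)) := min_le_left _ _
      -- a big ball carrying most of the mass of ν and eventually of νk
      have hc1 : (1 : ℝ≥0∞) - ENNReal.ofReal η < 1 := by
        apply ENNReal.sub_lt_self ENNReal.one_ne_top one_ne_zero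
        simpa using hηpos
      obtain ⟨R, hRpos, hR⟩ := tight_ball ν hc1
      have hνk_ev := ev_lt hν isOpen_ball hR
      have hcompl : ∀ᶠ k in atTop,
          (νk k : Measure (Euc n)) ((closedBall (0 : Euc n) R)ᶜ) ≤ ENNReal.ofReal η := by
        filter_upwards [hνk_ev] with k hk
        have hb : (νk k : Measure (Euc n)) ((ball (0 : Euc n) R)ᶜ)
            = 1 - (νk k : Measure (Euc n)) (ball 0 R) :=
          prob_compl_eq_one_sub measurableSet_ball
        have hmono : (νk k : Measure (Euc n)) ((closedBall (0 : Euc n) R)ᶜ)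
            ≤ (νk k : Measure (Euc n)) ((ball (0 : Euc n) R)ᶜ) :=
          measure_mono (Set.compl_subset_compl.mpr ball_subset_closedBall)
        refine hmono.trans ?_
        rw [hb]
        rw [tsub_le_iff_right]
        have he1 : ENNReal.ofReal η ≤ 1 := by
          simpa using ENNReal.ofReal_le_one.mpr hη1
        calc (1 : ℝ≥0∞) = ENNReal.ofReal η + (1 - ENNReal.ofReal η) :=
              (add_tsub_cancel_of_le he1).symm
        _ ≤ ENNReal.ofReal η + (νk k : Measure (Euc n)) (ball 0 R) := by
              exact add_le_add le_rfl hk.le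
      -- uniform continuity of f on a big compact ball
      set R' : ℝ := C + L * R with hR'def
      have hUC : UniformContinuousOn f (closedBall (0 : Euc n) R') :=
        (isCompact_closedBall _ _).uniformContinuousOn_of_continuous f.continuous.continuousOn
      obtain ⟨δ, hδpos, hδ⟩ := (Metric.uniformContinuousOn_iff).mp hUC (ε/2) (by positivity)
      -- a finite net in the ball of radius R
      have htb : TotallyBounded (closedBall (0 : Euc n) R) :=
        (isCompact_closedBall _ _).totallyBounded
      obtain ⟨t, htfin, htcover⟩ := (Metric.totallyBounded_iff).mp htb
        (δ / (4 * ((L : ℝ) + 1))) (by positivity)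
      have hnet : ∀ᶠ k in (U : Filter ℕ), ∀ y ∈ t, dist (T k y) (S y) < δ/2 := by
        rw [eventually_all_finite htfin]
        intro y hy
        exact (Metric.tendsto_nhds.mp (hS y)) (δ/2) (by positivity)
      -- uniform approximation on the ball of radius R
      have hunif : ∀ᶠ k in (U : Filter ℕ),
          ∀ x ∈ closedBall (0 : Euc n) R, dist (T k x) (S x) < δ := by
        filter_upwards [hnet] with k hk
        intro x hx
        obtain ⟨y, hyt, hxy⟩ := Set.mem_iUnion₂.mp (htcover hx)
        rw [mem_ball] at hxy
        have l1 : dist (T k x) (T k y) ≤ L * dist x y :=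
          lipschitzWith_iff_dist_le_mul.mp (hT k) x y
        have l2 : dist (S y) (S x) ≤ L * dist y x :=
          lipschitzWith_iff_dist_le_mul.mp hLip y x
        have l3 : dist (T k y) (S y) < δ/2 := hk y hyt
        have l4 : (L : ℝ) * dist x y ≤ δ/4 := by
          have : (L : ℝ) * dist x y ≤ L * (δ / (4 * ((L : ℝ) + 1))) :=
            mul_le_mul_of_nonneg_left hxy.le hL0
          refine this.trans ?_
          have h41 : (0:ℝ) < (L:ℝ) + 1 := by positivity
          calc (L:ℝ) * (δ / (4 * ((L:ℝ)+1)))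
              ≤ ((L:ℝ)+1) * (δ / (4 * ((L:ℝ)+1))) := by
                apply mul_le_mul_of_nonneg_right (by linarith) (by positivity)
          _ = δ/4 := by field_simp
        calc dist (T k x) (S x)
            ≤ dist (T k x) (T k y) + dist (T k y) (S y) + dist (S y) (S x) :=
              dist_triangle4 _ _ _ _
        _ < δ/4 + δ/2 + δ/4 := by
              have l2' : dist (S y) (S x) ≤ δ/4 := by
                rw [dist_comm y x] at l2
                exact l2.trans l4
              have l1' : dist (T k x) (T k y) ≤ δ/4 := l1.trans l4
              linarith
        _ = δ := by ring
      -- now assemble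
      filter_upwards [hunif, hUat hgrow, hUat hcompl] with k hk1 hk2 hk3
      have hpt : ∀ x : Euc n, |f (T k x) - f (S x)|
          ≤ ε/2 + Set.indicator (closedBall (0 : Euc n) R)ᶜ (fun _ => 2*Cf) x := by
        intro x
        by_cases hx : x ∈ closedBall (0 : Euc n) R
        · have hxR : ‖x‖ ≤ R := by rwa [mem_closedBall, dist_zero_right] at hx
          have hb1 : T k x ∈ closedBall (0 : Euc n) R' := by
            rw [mem_closedBall, dist_zero_right]
            refine (hk2 x).trans ?_
            rw [hR'def]
            have : (L : ℝ) * ‖x‖ ≤ L * R := mul_le_mul_of_nonneg_left hxR hL0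
            linarith
          have hb2 : S x ∈ closedBall (0 : Euc n) R' := by
            rw [mem_closedBall, dist_zero_right]
            refine (hSnorm x).trans ?_
            rw [hR'def]
            have : (L : ℝ) * ‖x‖ ≤ L * R := mul_le_mul_of_nonneg_left hxR hL0
            linarith
          have := hδ _ hb1 _ hb2 (hk1 x hx)
          rw [Real.dist_eq] at this
          rw [Set.indicator_of_notMem (by simpa using hx)]
          linarith
        · rw [Set.indicator_of_mem (by simpa using hx)]
          have b1 : |f (T k x)| ≤ Cf := f.norm_coe_le_norm _
          have b2 : |f (S x)| ≤ Cf := f.norm_coe_le_norm _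
          have habs : |f (T k x) - f (S x)| ≤ |f (T k x)| + |f (S x)| := abs_sub _ _
          have : (0:ℝ) < ε/2 := by positivity
          linarith
      have hint1 : Integrable (fun x => f (T k x)) (νk k : Measure (Euc n)) :=
        (f.compContinuous ⟨T k, (hT k).continuous⟩).integrable _
      have hint2 : Integrable (fun x => g x) (νk k : Measure (Euc n)) := g.integrable _
      have hmeasK : MeasurableSet ((closedBall (0 : Euc n) R)ᶜ) :=
        measurableSet_closedBall.compl
      have hintInd : Integrable (fun x : Euc n =>
          ε/2 + Set.indicator (closedBall (0 : Euc n) R)ᶜ (fun _ => 2*Cf) x)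
          (νk k : Measure (Euc n)) := by
        refine (integrable_const _).add ?_
        exact (integrable_const (2*Cf)).indicator hmeasK
      have hνkC : ((νk k : Measure (Euc n)) ((closedBall (0 : Euc n) R)ᶜ)).toReal ≤ η :=
        ENNReal.toReal_le_of_le_ofReal hηpos.le hk3
      rw [dist_zero_right, Real.norm_eq_abs, abs_of_nonneg dist_nonneg, Real.dist_eq,
        ← integral_sub hint1 hint2]
      calc |∫ x, (f (T k x) - g x) ∂(νk k : Measure (Euc n))|
          ≤ ∫ x, |f (T k x) - g x| ∂(νk k : Measure (Euc n)) :=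
            by simpa [Real.norm_eq_abs] using
              norm_integral_le_integral_norm (μ := (νk k : Measure (Euc n)))
                (fun x => f (T k x) - g x)
      _ ≤ ∫ x, (ε/2 + Set.indicator (closedBall (0 : Euc n) R)ᶜ (fun _ => 2*Cf) x)
            ∂(νk k : Measure (Euc n)) := by
            refine integral_mono (hint1.sub hint2).abs hintInd ?_
            intro x
            simpa [hgx] using hpt x
      _ = ε/2 + ((νk k : Measure (Euc n)) ((closedBall (0 : Euc n) R)ᶜ)).toReal • (2*Cf) := by
            rw [integral_add (integrable_const _) ((integrable_const (2*Cf)).indicator hmeasK),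
              integral_indicator_const _ hmeasK, integral_const]
            simp
            exact Or.inl rfl
      _ < ε := by
            rw [smul_eq_mul]
            have h2 : ((νk k : Measure (Euc n)) ((closedBall (0 : Euc n) R)ᶜ)).toReal * (2*Cf)
                ≤ η * (2*Cf) := by
              apply mul_le_mul_of_nonneg_right hνkC (by positivity)
            have h3 : η * (2*Cf) ≤ ε/4 := by
              have := mul_le_mul_of_nonneg_right hηε (by positivity : (0:ℝ) ≤ 2*Cf)
              refine this.trans ?_
              rw [div_mul_eq_mul_div, div_le_iff₀ (by positivity)]
              nlinarith
            linarith
    have h4 : Tendsto (fun k => dist (∫ x, g x ∂(νk k : Measure (Euc n)))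
        (∫ x, g x ∂(ν : Measure (Euc n)))) (U : Filter ℕ) (nhds 0) :=
      tendsto_iff_dist_tendsto_zero.mp (h3.mono_left hUat)
    have h2 : Tendsto (fun k => ∫ x, f (T k x) ∂(νk k : Measure (Euc n))) (U : Filter ℕ)
        (nhds (∫ x, g x ∂(ν : Measure (Euc n)))) := by
      rw [tendsto_iff_dist_tendsto_zero]
      have hsum := hdiff.add h4
      rw [add_zero] at hsum
      refine squeeze_zero (fun k => dist_nonneg) (fun k => ?_) hsum
      exact dist_triangle _ _ _
    have h1' := h1.mono_left hUat
    simp_rw [hrw] at h1'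
    have := tendsto_nhds_unique h1' h2
    simpa [hgx] using this
  -- Step (d): conclude.
  have hSae : AEMeasurable S (ν : Measure (Euc n)) := hScont.measurable.aemeasurable
  have hconst : Tendsto (fun _ : ℕ => ν.map hSae) atTop (nhds μ) := by
    rw [ProbabilityMeasure.tendsto_iff_forall_integral_tendsto]
    intro f
    have heq : ∫ x, f x ∂(ν.map hSae : Measure (Euc n)) = ∫ x, f x ∂(μ : Measure (Euc n)) := by
      rw [ProbabilityMeasure.toMeasure_map,
        integral_map hSae f.continuous.measurable.aestronglyMeasurable, key f]
    rw [heq]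
    exact tendsto_const_nhds
  have hfinal : ν.map hSae = μ := tendsto_nhds_unique tendsto_const_nhds hconst
  refine ⟨S, hLip, ?_⟩
  rw [← ProbabilityMeasure.toMeasure_map ν hSae, hfinal]
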